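/- arXiv:2106.12969 — 3 statements merged into one kernel-verified Lean document; each statement's English description precedes it below -/
import Mathlib

section
/- Let R and B be disjoint finite sets of points in ℝ² and S = R ∪ B. If Z is a simultaneous boxes class cover of S consisting of k boxes, then there exists a simultaneous boxes class cover Z' of S consisting of at most k boxes such that every box of Z' covers at least one point of S, every box of Z' is contained in a box of Z, and every box of Z' covering a red point is disjoint, as a closed set, from every box of Z' covering a blue point. -/
/-- An axis-aligned box: a closed rectangle `[a₁,b₁] × [a₂,b₂]` with nonempty interior. -/
def IsBox (K : Set (ℝ × ℝ)) : Prop :=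
  ∃ a₁ b₁ a₂ b₂ : ℝ, a₁ < b₁ ∧ a₂ < b₂ ∧ K = Set.Icc a₁ b₁ ×ˢ Set.Icc a₂ b₂

/-- Shrink a box containing a finite nonempty set `P` in its interior to a box whose
closure lies inside the interior, still containing `P` in its interior. -/
lemma shrink_box (K : Set (ℝ × ℝ)) (hK : IsBox K) (P : Set (ℝ × ℝ))
    (hPfin : P.Finite) (hPne : P.Nonempty) (hP : P ⊆ interior K) :
    ∃ K', IsBox K' ∧ K' ⊆ interior K ∧ P ⊆ interior K' := by
  obtain ⟨a₁, b₁, a₂, b₂, h1, h2, rfl⟩ := hK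
  have hint : interior (Set.Icc a₁ b₁ ×ˢ Set.Icc a₂ b₂) =
      Set.Ioo a₁ b₁ ×ˢ Set.Ioo a₂ b₂ := by
    rw [interior_prod_eq, interior_Icc, interior_Icc]
  rw [hint] at hP
  set F : Finset (ℝ × ℝ) := hPfin.toFinset with hF
  have hFne : F.Nonempty := by rwa [hF, Set.Finite.toFinset_nonempty]
  set f : ℝ × ℝ → ℝ := fun p => min (min (p.1 - a₁) (b₁ - p.1)) (min (p.2 - a₂) (b₂ - p.2))
    with hf
  set ε : ℝ := min (min ((b₁ - a₁) / 3) ((b₂ - a₂) / 3)) (F.inf' hFne f) with hε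
  have hmemP : ∀ p ∈ P, a₁ < p.1 ∧ p.1 < b₁ ∧ a₂ < p.2 ∧ p.2 < b₂ := by
    intro p hp
    have := hP hp
    simp only [Set.mem_prod, Set.mem_Ioo] at this
    exact ⟨this.1.1, this.1.2, this.2.1, this.2.2⟩
  have hεpos : 0 < ε := by
    refine lt_min (lt_min (by linarith) (by linarith)) ?_
    rw [Finset.lt_inf'_iff]
    intro p hp
    have hpP : p ∈ P := by rwa [hF, Set.Finite.mem_toFinset] at hp
    obtain ⟨hA, hB, hC, hD⟩ := hmemP p hpP
    simp only [hf, lt_min_iff]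
    refine ⟨⟨by linarith, by linarith⟩, by linarith, by linarith⟩
  have hε1 : ε ≤ (b₁ - a₁) / 3 := (min_le_left _ _).trans (min_le_left _ _)
  have hε2 : ε ≤ (b₂ - a₂) / 3 := (min_le_left _ _).trans (min_le_right _ _)
  have hεf : ∀ p ∈ P, ε ≤ f p := by
    intro p hp
    exact (min_le_right _ _).trans (Finset.inf'_le f (by rwa [hF, Set.Finite.mem_toFinset]))
  refine ⟨Set.Icc (a₁ + ε / 2) (b₁ - ε / 2) ×ˢ Set.Icc (a₂ + ε / 2) (b₂ - ε / 2),
    ⟨a₁ + ε / 2, b₁ - ε / 2, a₂ + ε / 2, b₂ - ε / 2, by linarith, by linarith, rfl⟩,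
    ?_, ?_⟩
  · rw [hint]
    rintro ⟨x, y⟩ hx
    simp only [Set.mem_prod, Set.mem_Icc] at hx
    simp only [Set.mem_prod, Set.mem_Ioo]
    exact ⟨⟨by linarith [hx.1.1], by linarith [hx.1.2]⟩,
           ⟨by linarith [hx.2.1], by linarith [hx.2.2]⟩⟩
  · intro p hp
    have hfp := hεf p hp
    simp only [hf, le_min_iff] at hfp
    rw [interior_prod_eq, interior_Icc, interior_Icc]
    simp only [Set.mem_prod, Set.mem_Ioo]
    exact ⟨⟨by linarith [hfp.1.1], by linarith [hfp.1.2]⟩,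
           ⟨by linarith [hfp.2.1], by linarith [hfp.2.2]⟩⟩

/-- `Z` (a family of `k` boxes) is a simultaneous boxes class cover of the bichromatic
point set with red points `R` and blue points `B`: all boxes are axis-aligned boxes,
every point of `R ∪ B` lies in the interior of some box, no box covers (has in its
interior) both a red and a blue point, and any box covering a red point has interior
disjoint from the interior of any box covering a blue point. -/
def IsSBCC (R B : Set (ℝ × ℝ)) (k : ℕ) (Z : Fin k → Set (ℝ × ℝ)) : Prop :=
  (∀ i, IsBox (Z i)) ∧
  (∀ p ∈ R ∪ B, ∃ i, p ∈ interior (Z i)) ∧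
  (∀ i, ¬((∃ r ∈ R, r ∈ interior (Z i)) ∧ (∃ b ∈ B, b ∈ interior (Z i)))) ∧
  (∀ i j, (∃ r ∈ R, r ∈ interior (Z i)) → (∃ b ∈ B, b ∈ interior (Z j)) →
    interior (Z i) ∩ interior (Z j) = ∅)

/-- From any SBCC `Z` of `S = R ∪ B` with `k` boxes one obtains an SBCC
`Z'` with at most `k` boxes such that every box of `Z'` covers a point of `S`, every box
of `Z'` is contained in some box of `Z`, and every box of `Z'` covering a red point is
disjoint (as a closed set) from every box of `Z'` covering a blue point. -/
theorem sbcc_shrink_to_separated (R B : Set (ℝ × ℝ))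
    (hRfin : R.Finite) (hBfin : B.Finite) (hRB : Disjoint R B)
    (k : ℕ) (Z : Fin k → Set (ℝ × ℝ)) (hZ : IsSBCC R B k Z) :
    ∃ (m : ℕ) (Z' : Fin m → Set (ℝ × ℝ)), m ≤ k ∧ IsSBCC R B m Z' ∧
      (∀ i : Fin m, ∃ p ∈ R ∪ B, p ∈ interior (Z' i)) ∧
      (∀ i : Fin m, ∃ j : Fin k, Z' i ⊆ Z j) ∧
      (∀ i j : Fin m, (∃ r ∈ R, r ∈ interior (Z' i)) →
        (∃ b ∈ B, b ∈ interior (Z' j)) → Z' i ∩ Z' j = ∅) := by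
  classical
  obtain ⟨hbox, hcov, hmono, hdisj⟩ := hZ
  have hSfin : (R ∪ B).Finite := hRfin.union hBfin
  let T := {i : Fin k // ∃ p ∈ R ∪ B, p ∈ interior (Z i)}
  let m := Fintype.card T
  have hm : m ≤ k := by
    have h := Fintype.card_subtype_le (fun i : Fin k => ∃ p ∈ R ∪ B, p ∈ interior (Z i))
    rwa [Fintype.card_fin] at h
  let e : Fin m ≃ T := (Fintype.equivFin T).symm
  have H : ∀ j : Fin m, ∃ K', IsBox K' ∧ K' ⊆ interior (Z (e j).1) ∧
      ((R ∪ B) ∩ interior (Z (e j).1)) ⊆ interior K' := by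
    intro j
    obtain ⟨p, hpS, hp⟩ := (e j).2
    exact shrink_box _ (hbox _) _ (hSfin.inter_of_left _) ⟨p, hpS, hp⟩
      Set.inter_subset_right
  choose Z' hb1 hb2 hb3 using H
  have hsub : ∀ j, interior (Z' j) ⊆ interior (Z (e j).1) :=
    fun j => subset_trans interior_subset (hb2 j)
  have key : ∀ i j : Fin m, (∃ r ∈ R, r ∈ interior (Z' i)) →
      (∃ b ∈ B, b ∈ interior (Z' j)) → Z' i ∩ Z' j = ∅ := by
    intro i j ⟨r, hr, hri⟩ ⟨b, hbB, hbj⟩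
    have hd := hdisj (e i).1 (e j).1 ⟨r, hr, hsub i hri⟩ ⟨b, hbB, hsub j hbj⟩
    rw [Set.eq_empty_iff_forall_notMem]
    rintro x ⟨hx1, hx2⟩
    have : x ∈ interior (Z (e i).1) ∩ interior (Z (e j).1) := ⟨hb2 i hx1, hb2 j hx2⟩
    rw [hd] at this
    exact this
  refine ⟨m, Z', hm, ⟨fun j => hb1 j, ?_, ?_, ?_⟩, ?_, ?_, key⟩
  · -- coverage
    intro p hp
    obtain ⟨i, hpi⟩ := hcov p hp
    refine ⟨e.symm ⟨i, ⟨p, hp, hpi⟩⟩, ?_⟩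
    apply hb3
    simp only [Equiv.apply_symm_apply]
    exact ⟨hp, hpi⟩
  · -- no box covers red and blue
    rintro j ⟨⟨r, hr, hri⟩, ⟨b, hbB, hbi⟩⟩
    exact hmono (e j).1 ⟨⟨r, hr, hsub j hri⟩, ⟨b, hbB, hsub j hbi⟩⟩
  · -- interiors disjoint
    intro i j hri hbj
    have := key i j hri hbj
    rw [Set.eq_empty_iff_forall_notMem]
    rintro x ⟨hx1, hx2⟩
    have hx : x ∈ Z' i ∩ Z' j := ⟨interior_subset hx1, interior_subset hx2⟩
    rw [this] at hx
    exact hx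
  · -- every new box covers a point
    intro j
    obtain ⟨p, hpS, hp⟩ := (e j).2
    exact ⟨p, hpS, hb3 j ⟨hpS, hp⟩⟩
  · -- containment
    intro j
    exact ⟨(e j).1, (hb2 j).trans interior_subset⟩
end

section
/- Let P be a finite union of axis-aligned boxes and let v be a convex vertex of P (a boundary point of P admitting an open neighborhood N with P ∩ N = Q ∩ N for a closed axis-aligned quadrant Q with corner v). Then v is a corner of one of the boxes in the union. -/
/-- A closed axis-aligned quadrant with corner `v`. -/
def IsQuadrantAt (v : ℝ × ℝ) (Q : Set (ℝ × ℝ)) : Prop :=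
  ∃ sx sy : Bool,
    Q = {p : ℝ × ℝ | (if sx then v.1 ≤ p.1 else p.1 ≤ v.1) ∧
                     (if sy then v.2 ≤ p.2 else p.2 ≤ v.2)}

/-- A closed axis-parallel half-plane whose boundary line passes through `v`. -/
def IsHalfPlaneAt (v : ℝ × ℝ) (H : Set (ℝ × ℝ)) : Prop :=
  H = {p : ℝ × ℝ | p.1 ≤ v.1} ∨ H = {p : ℝ × ℝ | v.1 ≤ p.1} ∨
  H = {p : ℝ × ℝ | p.2 ≤ v.2} ∨ H = {p : ℝ × ℝ | v.2 ≤ p.2}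

/-- An edge point of `P`. -/
def IsEdgePointOf (P : Set (ℝ × ℝ)) (v : ℝ × ℝ) : Prop :=
  v ∈ frontier P ∧
    ∃ N H : Set (ℝ × ℝ), IsOpen N ∧ v ∈ N ∧ IsHalfPlaneAt v H ∧ P ∩ N = H ∩ N

/-- A convex vertex of `P`. -/
def IsConvexVertexOf (P : Set (ℝ × ℝ)) (v : ℝ × ℝ) : Prop :=
  v ∈ frontier P ∧
    ∃ N Q : Set (ℝ × ℝ), IsOpen N ∧ v ∈ N ∧ IsQuadrantAt v Q ∧ P ∩ N = Q ∩ N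

/-- A reflex vertex of `P`. -/
def IsReflexVertexOf (P : Set (ℝ × ℝ)) (v : ℝ × ℝ) : Prop :=
  v ∈ frontier P ∧
    ∃ N Q : Set (ℝ × ℝ), IsOpen N ∧ v ∈ N ∧ IsQuadrantAt v Q ∧ closure Pᶜ ∩ N = Q ∩ N

/-- `P` is a finite union of axis-aligned boxes. -/
def IsFiniteUnionOfBoxes (P : Set (ℝ × ℝ)) : Prop :=
  ∃ (n : ℕ) (b : Fin n → Set (ℝ × ℝ)), (∀ i, IsBox (b i)) ∧ P = ⋃ i, b i

/-- A rectilinear polygon: compact, connected, a finite union of axis-aligned boxes, and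
every boundary point is of exactly one of the three types. -/
def IsRectilinearPolygon (P : Set (ℝ × ℝ)) : Prop :=
  IsCompact P ∧ IsConnected P ∧ IsFiniteUnionOfBoxes P ∧
  ∀ v ∈ frontier P,
    (IsEdgePointOf P v ∧ ¬IsConvexVertexOf P v ∧ ¬IsReflexVertexOf P v) ∨
    (¬IsEdgePointOf P v ∧ IsConvexVertexOf P v ∧ ¬IsReflexVertexOf P v) ∨
    (¬IsEdgePointOf P v ∧ ¬IsConvexVertexOf P v ∧ IsReflexVertexOf P v)

/-- `C` is a hole of `P`: a bounded connected component of the complement of `P`. -/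
def IsHoleOf (P C : Set (ℝ × ℝ)) : Prop :=
  ∃ x, x ∉ P ∧ Bornology.IsBounded (connectedComponentIn Pᶜ x) ∧
    C = connectedComponentIn Pᶜ x

/-- `v` is a corner of the axis-aligned box `K`. -/
def IsCornerOf (v : ℝ × ℝ) (K : Set (ℝ × ℝ)) : Prop :=
  ∃ a₁ b₁ a₂ b₂ : ℝ, a₁ < b₁ ∧ a₂ < b₂ ∧ K = Set.Icc a₁ b₁ ×ˢ Set.Icc a₂ b₂ ∧
    (v = (a₁, a₂) ∨ v = (a₁, b₂) ∨ v = (b₁, a₂) ∨ v = (b₁, b₂))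

/-- If `P` is a finite union of axis-aligned boxes and `v` is a convex
vertex of `P`, then `v` is a corner of one of the boxes in the union. -/
theorem convex_vertex_is_box_corner (n : ℕ) (b : Fin n → Set (ℝ × ℝ))
    (hb : ∀ i, IsBox (b i)) (P : Set (ℝ × ℝ)) (hP : P = ⋃ i, b i)
    (v : ℝ × ℝ) (hv : IsConvexVertexOf P v) :
    ∃ i : Fin n, IsCornerOf v (b i) := by
  obtain ⟨hvf, N, Q, hN, hvN, ⟨sx, sy, hQ⟩, hPQ⟩ := hv
  set s₁ : ℝ := if sx then 1 else -1 with hs₁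
  set s₂ : ℝ := if sy then 1 else -1 with hs₂
  have hs1 : s₁ = 1 ∨ s₁ = -1 := by cases sx <;> simp [hs₁]
  have hs2 : s₂ = 1 ∨ s₂ = -1 := by cases sy <;> simp [hs₂]
  have hQmem : ∀ p : ℝ × ℝ, p ∈ Q ↔ 0 ≤ s₁ * (p.1 - v.1) ∧ 0 ≤ s₂ * (p.2 - v.2) := by
    intro p
    rw [hQ]
    cases sx <;> cases sy <;> simp [hs₁, hs₂] <;>
      constructor <;> rintro ⟨h1, h2⟩ <;> constructor <;> linarith
  have hdist : ∀ c d : ℝ, dist ((v.1 + c, v.2 + d) : ℝ × ℝ) v = max |c| |d| := by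
    intro c d
    rw [Prod.dist_eq]
    simp [Real.dist_eq]
  have habs1 : |s₁| = 1 := by rcases hs1 with h | h <;> simp [h]
  have habs2 : |s₂| = 1 := by rcases hs2 with h | h <;> simp [h]
  obtain ⟨r, hr, hball⟩ := Metric.isOpen_iff.mp hN v hvN
  -- the diagonal point
  set p : ℝ → ℝ × ℝ := fun t => (v.1 + s₁ * t, v.2 + s₂ * t) with hp
  have hpdist : ∀ t : ℝ, 0 ≤ t → dist (p t) v = t := by
    intro t ht
    rw [hp]
    simp only
    rw [hdist]; simp [abs_mul, habs1, habs2, abs_of_nonneg ht]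
  have hpP : ∀ t : ℝ, 0 < t → t < r → p t ∈ P := by
    intro t ht htr
    have hq : p t ∈ Q := by
      rw [hQmem]
      constructor <;> simp only [hp] <;> rcases hs1 with h|h <;> rcases hs2 with h'|h' <;>
        simp [h, h'] <;> linarith
    have hn : p t ∈ N := hball (by rw [Metric.mem_ball, hpdist t ht.le]; exact htr)
    have : p t ∈ P ∩ N := by rw [hPQ]; exact ⟨hq, hn⟩
    exact this.1
  -- pigeonhole over boxes
  have htk : ∀ k : ℕ, 0 < r / (k + 2) ∧ r / (k + 2) < r := by
    intro k
    constructor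
    · positivity
    · apply div_lt_self hr
      have : (0:ℝ) ≤ (k:ℝ) := Nat.cast_nonneg k
      linarith
  have hmem : ∀ k : ℕ, ∃ i, p (r / (k + 2)) ∈ b i := by
    intro k
    have h := hpP _ (htk k).1 (htk k).2
    rw [hP] at h
    exact Set.mem_iUnion.mp h
  choose f hf using hmem
  obtain ⟨i, hi'⟩ := Finite.exists_infinite_fiber f
  have hi : (f ⁻¹' {i} : Set ℕ).Infinite := Set.infinite_coe_iff.mp hi'
  refine ⟨i, ?_⟩
  obtain ⟨a₁, b₁, a₂, b₂, ha, ha', hbi⟩ := hb i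
  -- v ∈ b i
  have hclosed : IsClosed (b i) := by
    rw [hbi]; exact (isClosed_Icc).prod isClosed_Icc
  have hvbi : v ∈ b i := by
    rw [← hclosed.closure_eq]
    rw [Metric.mem_closure_iff]
    intro ε hε
    obtain ⟨m, hm⟩ := exists_nat_gt (r / ε)
    obtain ⟨k, hk, hkm⟩ := hi.exists_gt m
    refine ⟨p (r / (k + 2)), ?_, ?_⟩
    · have hfk : f k = i := hk
      rw [← hfk]; exact hf k
    · rw [dist_comm, hpdist _ (htk k).1.le]
      rw [div_lt_iff₀ (by positivity)]
      have h1 : r / ε < (k:ℝ) + 2 := by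
        have : (m:ℝ) < (k:ℝ) := by exact_mod_cast hkm
        linarith
      calc r = (r / ε) * ε := by field_simp
        _ < ((k:ℝ) + 2) * ε := by
            apply mul_lt_mul_of_pos_right h1 hε
        _ = ε * ((k:ℝ) + 2) := by ring
  -- a specific point of b i strictly inside the quadrant
  obtain ⟨k₀, hk₀⟩ := hi.nonempty
  have hk₀' : f k₀ = i := hk₀
  set t₀ : ℝ := r / (k₀ + 2) with ht₀def
  have ht₀ : 0 < t₀ := (htk k₀).1
  have ht₀r : t₀ < r := (htk k₀).2
  have hpt₀ : p t₀ ∈ b i := hk₀' ▸ hf k₀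
  rw [hbi] at hvbi hpt₀
  have hva1 : a₁ ≤ v.1 := hvbi.1.1
  have hvb1 : v.1 ≤ b₁ := hvbi.1.2
  have hva2 : a₂ ≤ v.2 := hvbi.2.1
  have hvb2 : v.2 ≤ b₂ := hvbi.2.2
  have hpt1 : a₁ ≤ v.1 + s₁ * t₀ ∧ v.1 + s₁ * t₀ ≤ b₁ := ⟨hpt₀.1.1, hpt₀.1.2⟩
  have hpt2 : a₂ ≤ v.2 + s₂ * t₀ ∧ v.2 + s₂ * t₀ ≤ b₂ := ⟨hpt₀.2.1, hpt₀.2.2⟩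
  -- the box lies in the quadrant's x half-plane
  have key : ∀ (w : ℝ × ℝ), w ∈ b i → dist w v < r → 0 ≤ s₁ * (w.1 - v.1) ∧ 0 ≤ s₂ * (w.2 - v.2) := by
    intro w hw hwr
    have hwN : w ∈ N := hball (Metric.mem_ball.mpr hwr)
    have hwP : w ∈ P := by rw [hP]; exact Set.mem_iUnion.mpr ⟨i, hw⟩
    have : w ∈ Q ∩ N := by rw [← hPQ]; exact ⟨hwP, hwN⟩
    exact (hQmem w).mp this.1
  have hx : ∀ x ∈ Set.Icc a₁ b₁, 0 ≤ s₁ * (x - v.1) := by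
    intro x hxm
    by_contra hcon
    push_neg at hcon
    set δ : ℝ := min (min (r/2) t₀) (s₁ * (v.1 - x)) with hδdef
    have hδpos : 0 < δ := by
      apply lt_min (lt_min (by linarith) ht₀)
      linarith
    have hδr : δ < r := lt_of_le_of_lt (le_trans (min_le_left _ _) (min_le_left _ _)) (by linarith)
    have hδt₀ : δ ≤ t₀ := le_trans (min_le_left _ _) (min_le_right _ _)
    have hδx : δ ≤ s₁ * (v.1 - x) := min_le_right _ _
    set q : ℝ × ℝ := (v.1 - s₁ * δ, v.2 + s₂ * δ) with hq'
    have hq1 : a₁ ≤ q.1 ∧ q.1 ≤ b₁ := by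
      simp only [hq']
      rcases hs1 with h|h <;> rw [h] at hδx ⊢ <;>
        constructor <;> first
          | linarith [hxm.1, hxm.2]
          | nlinarith [hxm.1, hxm.2]
    have hq2 : a₂ ≤ q.2 ∧ q.2 ≤ b₂ := by
      simp only [hq']
      rcases hs2 with h|h <;> rw [h] at hpt2 ⊢ <;>
        constructor <;> linarith [hpt2.1, hpt2.2]
    have hqbi : q ∈ b i := by
      rw [hbi]; exact ⟨⟨hq1.1, hq1.2⟩, hq2.1, hq2.2⟩
    have hqdist : dist q v < r := by
      have : q = (v.1 + (-(s₁ * δ)), v.2 + s₂ * δ) := by simp [hq']; ring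
      rw [this, hdist, abs_neg, abs_mul, abs_mul, habs1, habs2,
        abs_of_nonneg hδpos.le, max_self]
      linarith
    have := (key q hqbi hqdist).1
    simp only [hq'] at this
    rcases hs1 with h|h <;> rw [h] at this <;> linarith
  have hy : ∀ y ∈ Set.Icc a₂ b₂, 0 ≤ s₂ * (y - v.2) := by
    intro y hym
    by_contra hcon
    push_neg at hcon
    set δ : ℝ := min (min (r/2) t₀) (s₂ * (v.2 - y)) with hδdef
    have hδpos : 0 < δ := by
      apply lt_min (lt_min (by linarith) ht₀)
      linarith
    have hδr : δ < r := lt_of_le_of_lt (le_trans (min_le_left _ _) (min_le_left _ _)) (by linarith)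
    have hδt₀ : δ ≤ t₀ := le_trans (min_le_left _ _) (min_le_right _ _)
    have hδy : δ ≤ s₂ * (v.2 - y) := min_le_right _ _
    set q : ℝ × ℝ := (v.1 + s₁ * δ, v.2 - s₂ * δ) with hq'
    have hq1 : a₁ ≤ q.1 ∧ q.1 ≤ b₁ := by
      simp only [hq']
      rcases hs1 with h|h <;> rw [h] at hpt1 ⊢ <;>
        constructor <;> linarith [hpt1.1, hpt1.2]
    have hq2 : a₂ ≤ q.2 ∧ q.2 ≤ b₂ := by
      simp only [hq']
      rcases hs2 with h|h <;> rw [h] at hδy ⊢ <;>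
        constructor <;> first
          | linarith [hym.1, hym.2]
          | nlinarith [hym.1, hym.2]
    have hqbi : q ∈ b i := by
      rw [hbi]; exact ⟨⟨hq1.1, hq1.2⟩, hq2.1, hq2.2⟩
    have hqdist : dist q v < r := by
      have : q = (v.1 + s₁ * δ, v.2 + (-(s₂ * δ))) := by simp [hq']; ring
      rw [this, hdist, abs_neg, abs_mul, abs_mul, habs1, habs2,
        abs_of_nonneg hδpos.le, max_self]
      linarith
    have := (key q hqbi hqdist).2
    simp only [hq'] at this
    rcases hs2 with h|h <;> rw [h] at this <;> linarith
  have hX : v.1 = a₁ ∨ v.1 = b₁ := by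
    rcases hs1 with h|h
    · left
      have := hx a₁ ⟨le_refl _, ha.le⟩
      rw [h] at this; linarith
    · right
      have := hx b₁ ⟨ha.le, le_refl _⟩
      rw [h] at this; linarith
  have hY : v.2 = a₂ ∨ v.2 = b₂ := by
    rcases hs2 with h|h
    · left
      have := hy a₂ ⟨le_refl _, ha'.le⟩
      rw [h] at this; linarith
    · right
      have := hy b₂ ⟨ha'.le, le_refl _⟩
      rw [h] at this; linarith
  refine ⟨a₁, b₁, a₂, b₂, ha, ha', hbi, ?_⟩
  rcases hX with h|h <;> rcases hY with h'|h' <;>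
    simp [Prod.ext_iff, h, h']
end

section
/- Let P be a rectilinear polygon with c convex vertices. Then any finite family of axis-aligned boxes whose union equals P contains at least c/4 boxes. -/
lemma corner_of_convexVertex {P : Set (ℝ × ℝ)} {v : ℝ × ℝ}
    (hv : IsConvexVertexOf P v) {a₁ b₁ a₂ b₂ : ℝ}
    (hK : Set.Icc a₁ b₁ ×ˢ Set.Icc a₂ b₂ ⊆ P)
    (hvK : v ∈ Set.Icc a₁ b₁ ×ˢ Set.Icc a₂ b₂) :
    (v.1 = a₁ ∨ v.1 = b₁) ∧ (v.2 = a₂ ∨ v.2 = b₂) := by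
  obtain ⟨-, N, Q, hN, hvN, ⟨sx, sy, rfl⟩, hPNQ⟩ := hv
  obtain ⟨ε, hε, hball⟩ := Metric.isOpen_iff.mp hN v hvN
  obtain ⟨⟨hx1, hx2⟩, hy1, hy2⟩ := hvK
  have key : ∀ p : ℝ × ℝ, p ∈ Set.Icc a₁ b₁ ×ˢ Set.Icc a₂ b₂ → dist p v < ε →
      (if sx then v.1 ≤ p.1 else p.1 ≤ v.1) ∧ (if sy then v.2 ≤ p.2 else p.2 ≤ v.2) := by
    intro p hp hd
    have : p ∈ P ∩ N := ⟨hK hp, hball hd⟩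
    rw [hPNQ] at this
    exact this.1
  constructor
  · by_contra h
    push_neg at h
    have h1 : a₁ < v.1 := lt_of_le_of_ne hx1 (Ne.symm h.1)
    have h2 : v.1 < b₁ := lt_of_le_of_ne hx2 h.2
    obtain ⟨δ, hδ, hδε, hδ1, hδ2⟩ :
        ∃ δ : ℝ, 0 < δ ∧ δ < ε ∧ δ ≤ v.1 - a₁ ∧ δ ≤ b₁ - v.1 := by
      refine ⟨min (ε/2) (min (v.1 - a₁) (b₁ - v.1)), ?_, ?_, ?_, ?_⟩
      · exact lt_min (by linarith) (lt_min (by linarith) (by linarith))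
      · exact lt_of_le_of_lt (min_le_left _ _) (by linarith)
      · exact le_trans (min_le_right _ _) (min_le_left _ _)
      · exact le_trans (min_le_right _ _) (min_le_right _ _)
    have hdm : dist ((v.1 - δ, v.2) : ℝ × ℝ) v < ε := by
      rw [Prod.dist_eq, max_lt_iff]
      constructor
      · show |v.1 - δ - v.1| < ε
        rw [abs_lt]; constructor <;> linarith
      · show dist v.2 v.2 < ε
        simpa using hε
    have hdp : dist ((v.1 + δ, v.2) : ℝ × ℝ) v < ε := by
      rw [Prod.dist_eq, max_lt_iff]
      constructor
      · show |v.1 + δ - v.1| < ε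
        rw [abs_lt]; constructor <;> linarith
      · show dist v.2 v.2 < ε
        simpa using hε
    have hm := (key (v.1 - δ, v.2)
      (Set.mk_mem_prod (Set.mem_Icc.mpr ⟨by linarith, by linarith⟩)
        (Set.mem_Icc.mpr ⟨hy1, hy2⟩)) hdm).1
    have hp := (key (v.1 + δ, v.2)
      (Set.mk_mem_prod (Set.mem_Icc.mpr ⟨by linarith, by linarith⟩)
        (Set.mem_Icc.mpr ⟨hy1, hy2⟩)) hdp).1
    cases sx
    · simp only [if_neg Bool.false_ne_true] at hp
      have : v.1 + δ ≤ v.1 := hp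
      linarith
    · simp only [if_pos rfl] at hm
      have : v.1 ≤ v.1 - δ := hm
      linarith
  · by_contra h
    push_neg at h
    have h1 : a₂ < v.2 := lt_of_le_of_ne hy1 (Ne.symm h.1)
    have h2 : v.2 < b₂ := lt_of_le_of_ne hy2 h.2
    obtain ⟨δ, hδ, hδε, hδ1, hδ2⟩ :
        ∃ δ : ℝ, 0 < δ ∧ δ < ε ∧ δ ≤ v.2 - a₂ ∧ δ ≤ b₂ - v.2 := by
      refine ⟨min (ε/2) (min (v.2 - a₂) (b₂ - v.2)), ?_, ?_, ?_, ?_⟩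
      · exact lt_min (by linarith) (lt_min (by linarith) (by linarith))
      · exact lt_of_le_of_lt (min_le_left _ _) (by linarith)
      · exact le_trans (min_le_right _ _) (min_le_left _ _)
      · exact le_trans (min_le_right _ _) (min_le_right _ _)
    have hdm : dist ((v.1, v.2 - δ) : ℝ × ℝ) v < ε := by
      rw [Prod.dist_eq, max_lt_iff]
      constructor
      · show dist v.1 v.1 < ε
        simpa using hε
      · show |v.2 - δ - v.2| < ε
        rw [abs_lt]; constructor <;> linarith
    have hdp : dist ((v.1, v.2 + δ) : ℝ × ℝ) v < ε := by
      rw [Prod.dist_eq, max_lt_iff]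
      constructor
      · show dist v.1 v.1 < ε
        simpa using hε
      · show |v.2 + δ - v.2| < ε
        rw [abs_lt]; constructor <;> linarith
    have hm := (key (v.1, v.2 - δ)
      (Set.mk_mem_prod (Set.mem_Icc.mpr ⟨hx1, hx2⟩)
        (Set.mem_Icc.mpr ⟨by linarith, by linarith⟩)) hdm).2
    have hp := (key (v.1, v.2 + δ)
      (Set.mk_mem_prod (Set.mem_Icc.mpr ⟨hx1, hx2⟩)
        (Set.mem_Icc.mpr ⟨by linarith, by linarith⟩)) hdp).2
    cases sy
    · simp only [if_neg Bool.false_ne_true] at hp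
      have : v.2 + δ ≤ v.2 := hp
      linarith
    · simp only [if_pos rfl] at hm
      have : v.2 ≤ v.2 - δ := hm
      linarith

/-- A rectilinear polygon with `c` convex vertices cannot be written as a
union of fewer than `c/4` axis-aligned boxes. -/
theorem box_cover_lower_bound (P : Set (ℝ × ℝ)) (hP : IsRectilinearPolygon P)
    (c : ℕ) (hcfin : {v : ℝ × ℝ | IsConvexVertexOf P v}.Finite)
    (hc : {v : ℝ × ℝ | IsConvexVertexOf P v}.ncard = c) :
    ∀ (n : ℕ) (b : Fin n → Set (ℝ × ℝ)), (∀ i, IsBox (b i)) → P = ⋃ i, b i →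
      (c : ℝ) / 4 ≤ n := by
  intro n b hb hPb
  choose A B C D hAB hCD hbeq using hb
  have hPclosed : IsClosed P := hP.1.isClosed
  set S := {v : ℝ × ℝ | IsConvexVertexOf P v} with hS
  -- every convex vertex lies in P
  have hSP : ∀ v ∈ S, ∃ i : Fin n, v ∈ b i := by
    intro v hv
    have : v ∈ P := by
      have := hv.1
      rw [frontier, hPclosed.closure_eq] at this
      exact this.1
    rw [hPb] at this
    exact Set.mem_iUnion.mp this
  have hcard : c ≤ 4 * n := by
    rcases Nat.eq_zero_or_pos n with rfl | hn
    · -- P is empty, so S is empty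
      have hSempty : S = ∅ := by
        ext v
        simp only [Set.mem_empty_iff_false, iff_false]
        intro hv
        obtain ⟨i, _⟩ := hSP v hv
        exact i.elim0
      rw [← hc, hS] at *
      simp [hSempty]
    · have : Nonempty (Fin n) := ⟨⟨0, hn⟩⟩
      have hSP' : ∀ v : ℝ × ℝ, ∃ i : Fin n, v ∈ S → v ∈ b i := by
        intro v
        by_cases hv : v ∈ S
        · obtain ⟨i, hi⟩ := hSP v hv
          exact ⟨i, fun _ => hi⟩
        · exact ⟨Classical.arbitrary _, fun h => absurd h hv⟩
      choose idx hidx using hSP'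
      set g : ℝ × ℝ → Fin n × Bool × Bool :=
        fun v => (idx v, decide (v.1 = A (idx v)), decide (v.2 = C (idx v))) with hg
      have hcorner : ∀ v ∈ S, (v.1 = A (idx v) ∨ v.1 = B (idx v)) ∧
          (v.2 = C (idx v) ∨ v.2 = D (idx v)) := by
        intro v hv
        have hvb : v ∈ b (idx v) := hidx v hv
        rw [hbeq (idx v)] at hvb
        refine corner_of_convexVertex hv ?_ hvb
        rw [← hbeq (idx v)]
        rw [hPb]
        exact Set.subset_iUnion b (idx v)
      have hinj : Set.InjOn g S := by
        intro v hv w hw hgvw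
        have h1 : idx v = idx w := congrArg Prod.fst hgvw
        have h2 : decide (v.1 = A (idx v)) = decide (w.1 = A (idx w)) :=
          congrArg (fun p => p.2.1) hgvw
        have h3 : decide (v.2 = C (idx v)) = decide (w.2 = C (idx w)) :=
          congrArg (fun p => p.2.2) hgvw
        obtain ⟨hcx, hcy⟩ := hcorner v hv
        obtain ⟨hdx, hdy⟩ := hcorner w hw
        rw [h1] at hcx hcy h2 h3
        have hx : v.1 = w.1 := by
          by_cases hva : v.1 = A (idx w)
          · have : w.1 = A (idx w) := by
              have := h2; rw [decide_eq_true hva] at this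
              exact of_decide_eq_true this.symm
            rw [hva, this]
          · have hwb : v.1 = B (idx w) := hcx.resolve_left hva
            have : ¬ (w.1 = A (idx w)) := by
              intro hwa
              rw [decide_eq_false hva, decide_eq_true hwa] at h2
              exact Bool.false_ne_true h2
            rw [hwb, hdx.resolve_left this]
        have hy : v.2 = w.2 := by
          by_cases hva : v.2 = C (idx w)
          · have : w.2 = C (idx w) := by
              have := h3; rw [decide_eq_true hva] at this
              exact of_decide_eq_true this.symm
            rw [hva, this]
          · have hwb : v.2 = D (idx w) := hcy.resolve_left hva
            have : ¬ (w.2 = C (idx w)) := by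
              intro hwa
              rw [decide_eq_false hva, decide_eq_true hwa] at h3
              exact Bool.false_ne_true h3
            rw [hwb, hdy.resolve_left this]
        exact Prod.ext hx hy
      calc c = S.ncard := hc.symm
        _ ≤ Nat.card (Fin n × Bool × Bool) := by
            have := Set.ncard_image_of_injOn hinj
            rw [← this]
            have : (g '' S).Finite := hcfin.image g
            calc (g '' S).ncard ≤ (Set.univ : Set (Fin n × Bool × Bool)).ncard :=
                Set.ncard_le_ncard (Set.subset_univ _) Set.finite_univ
              _ = Nat.card (Fin n × Bool × Bool) := Set.ncard_univ _
        _ = 4 * n := by simp [Nat.card_eq_fintype_card]; ring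
  rw [div_le_iff₀ (by norm_num : (0:ℝ) < 4)]
  have : (c : ℝ) ≤ 4 * n := by exact_mod_cast hcard
  linarith
end
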